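/- Let X and Y be finite types with basepoints 0 and maps f : X → X, g : Y → Y fixing the basepoints, both nilpotent, each having at least one nonzero element, and let h be the smash structure map on X × Y. Then the height of the smash product equals the minimum of the heights: the maximum over nonzero pairs (x, y) (x ≠ 0, y ≠ 0) of sInf {n : ℕ | h^[n] (x, y) = (0, 0)} equals min (max over nonzero x of sInf {n | f^[n] x = 0}) (max over nonzero y of sInf {n | g^[n] y = 0}). In particular every component of Γ_{M ∧ N} has height ≤ min(height Γ_M, height Γ_N), and this bound is attained. -/
import Mathlib

lemma sInf_union_nat (A B : Set ℕ) (hA : A.Nonempty) (hB : B.Nonempty) :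
    sInf (A ∪ B) = min (sInf A) (sInf B) := by
  apply le_antisymm
  · rcases le_total (sInf A) (sInf B) with h' | h'
    · rw [min_eq_left h']
      exact Nat.sInf_le (Or.inl (Nat.sInf_mem hA))
    · rw [min_eq_right h']
      exact Nat.sInf_le (Or.inr (Nat.sInf_mem hB))
  · rcases Nat.sInf_mem (hA.mono Set.subset_union_left) with hmem | hmem
    · exact le_trans (min_le_left _ _) (Nat.sInf_le hmem)
    · exact le_trans (min_le_right _ _) (Nat.sInf_le hmem)

/-- **Proposition (height of the smash product of two nilpotent modules).**
Let `(X, 0, f)` and `(Y, 0, g)` be finite pointed modules with `f`, `g` nilpotent,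
each with at least one nonzero element, and let `h` be the smash structure map on
`X × Y`.  Then the height of the smash product equals the minimum of the heights:
the maximum over nonzero pairs `(x, y)` of the least `n` with `h^[n] (x, y) = (0,0)`
equals the minimum of the maximum over nonzero `x` of the least `n` with
`f^[n] x = 0` and the analogous quantity for `g`.  In particular every component
of `Γ_{M ∧ N}` has height `≤ min (height Γ_M, height Γ_N)`, with equality attained. -/
theorem smash_height_min {X Y : Type*} [Fintype X] [Fintype Y]
    [Zero X] [Zero Y] [DecidableEq X] [DecidableEq Y]
    (f : X → X) (g : Y → Y) (hf : f 0 = 0) (hg : g 0 = 0)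
    (hfnil : ∀ x : X, ∃ n : ℕ, f^[n] x = 0)
    (hgnil : ∀ y : Y, ∃ n : ℕ, g^[n] y = 0)
    (hXne : ∃ x : X, x ≠ 0) (hYne : ∃ y : Y, y ≠ 0)
    (h : X × Y → X × Y)
    (hh : ∀ p : X × Y,
      h p = if f p.1 ≠ 0 ∧ g p.2 ≠ 0 then (f p.1, g p.2) else (0, 0)) :
    (⨆ p : {p : X × Y // p.1 ≠ 0 ∧ p.2 ≠ 0},
        sInf {n : ℕ | h^[n] (p : X × Y) = (0, 0)}) =
      min (⨆ x : {x : X // x ≠ 0}, sInf {n : ℕ | f^[n] (x : X) = 0})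
        (⨆ y : {y : Y // y ≠ 0}, sInf {n : ℕ | g^[n] (y : Y) = 0}) := by
  obtain ⟨x₀, hx₀⟩ := hXne
  obtain ⟨y₀, hy₀⟩ := hYne
  haveI : Nonempty {x : X // x ≠ 0} := ⟨⟨x₀, hx₀⟩⟩
  haveI : Nonempty {y : Y // y ≠ 0} := ⟨⟨y₀, hy₀⟩⟩
  haveI : Nonempty {p : X × Y // p.1 ≠ 0 ∧ p.2 ≠ 0} := ⟨⟨(x₀, y₀), hx₀, hy₀⟩⟩
  have h00 : h (0, 0) = (0, 0) := by rw [hh]; simp [hf]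
  have hiter00 : ∀ n, h^[n] ((0 : X), (0 : Y)) = (0, 0) := fun n =>
    Function.iterate_fixed h00 n
  have hf0 : ∀ n, f^[n] (0 : X) = 0 := fun n => Function.iterate_fixed hf n
  have hg0 : ∀ n, g^[n] (0 : Y) = 0 := fun n => Function.iterate_fixed hg n
  -- key lemma: for n ≥ 1, h^[n] (x,y) = 0 iff f^[n] x = 0 or g^[n] y = 0
  have key : ∀ n (x : X) (y : Y), 1 ≤ n →
      (h^[n] (x, y) = (0, 0) ↔ f^[n] x = 0 ∨ g^[n] y = 0) := by
    intro n
    induction n with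
    | zero => intro x y hn; omega
    | succ n ih =>
      intro x y _
      rw [Function.iterate_succ_apply, hh]
      by_cases hc : f x ≠ 0 ∧ g y ≠ 0
      · rw [if_pos hc]
        rcases Nat.eq_zero_or_pos n with hn | hn
        · subst hn
          simp only [Function.iterate_zero, id_eq, Function.iterate_one,
            Prod.mk.injEq]
          constructor
          · rintro ⟨h1, h2⟩; exact Or.inl h1
          · rintro (h1 | h2)
            · exact absurd h1 hc.1
            · exact absurd h2 hc.2
        · rw [ih (f x) (g y) hn, ← Function.iterate_succ_apply,
            ← Function.iterate_succ_apply]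
      · rw [if_neg hc]
        simp only [hiter00, true_iff]
        rcases not_and_or.mp hc with h1 | h1
        · left
          rw [Function.iterate_succ_apply, not_ne_iff.mp h1, hf0]
        · right
          rw [Function.iterate_succ_apply, not_ne_iff.mp h1, hg0]
  -- per-pair value
  have pair_val : ∀ (x : X) (y : Y), x ≠ 0 → y ≠ 0 →
      sInf {n : ℕ | h^[n] (x, y) = (0, 0)} =
        min (sInf {n : ℕ | f^[n] x = 0}) (sInf {n : ℕ | g^[n] y = 0}) := by
    intro x y hx hy
    have hset : {n : ℕ | h^[n] (x, y) = (0, 0)} =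
        {n : ℕ | f^[n] x = 0} ∪ {n : ℕ | g^[n] y = 0} := by
      ext n
      rcases Nat.eq_zero_or_pos n with hn | hn
      · subst hn
        simp only [Set.mem_setOf_eq, Function.iterate_zero, id_eq,
          Set.mem_union, Prod.mk.injEq]
        constructor
        · rintro ⟨h1, _⟩; exact absurd h1 hx
        · rintro (h1 | h1)
          · exact absurd h1 hx
          · exact absurd h1 hy
      · simpa using key n x y hn
    rw [hset]
    exact sInf_union_nat _ _ (hfnil x) (hgnil y)
  -- abbreviations
  set a : {x : X // x ≠ 0} → ℕ := fun x => sInf {n : ℕ | f^[n] (x : X) = 0} with ha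
  set b : {y : Y // y ≠ 0} → ℕ := fun y => sInf {n : ℕ | g^[n] (y : Y) = 0} with hb
  have bddA : BddAbove (Set.range a) := Set.Finite.bddAbove (Set.finite_range a)
  have bddB : BddAbove (Set.range b) := Set.Finite.bddAbove (Set.finite_range b)
  have bddP : BddAbove (Set.range fun p : {p : X × Y // p.1 ≠ 0 ∧ p.2 ≠ 0} =>
      sInf {n : ℕ | h^[n] (p : X × Y) = (0, 0)}) :=
    Set.Finite.bddAbove (Set.finite_range _)
  apply le_antisymm
  · apply ciSup_le
    intro p
    rw [show ((p : X × Y)) = ((p : X × Y).1, (p : X × Y).2) from rfl,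
      pair_val _ _ p.2.1 p.2.2]
    exact min_le_min (le_ciSup bddA ⟨(p : X × Y).1, p.2.1⟩)
      (le_ciSup bddB ⟨(p : X × Y).2, p.2.2⟩)
  · obtain ⟨xm, hxm⟩ := Finite.exists_max a
    obtain ⟨ym, hym⟩ := Finite.exists_max b
    have hA : (⨆ x, a x) = a xm := le_antisymm (ciSup_le hxm) (le_ciSup bddA xm)
    have hB : (⨆ y, b y) = b ym := le_antisymm (ciSup_le hym) (le_ciSup bddB ym)
    rw [hA, hB]
    have := le_ciSup bddP (⟨((xm : X), (ym : Y)), xm.2, ym.2⟩ :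
      {p : X × Y // p.1 ≠ 0 ∧ p.2 ≠ 0})
    rw [pair_val _ _ xm.2 ym.2] at this
    exact this
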